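/- The biconvex (Fenchel biconjugate) envelope of the function f(M) = ½‖M‖_F² + χ_{rank(M) ≤ r}(M) on real n×m matrices equals ½‖M‖_{F,r*}², half the squared low-rank inducing Frobenius norm. -/

import Mathlib

open Matrix BigOperators Finset

/-- Singular values of a real `n × m` matrix, in nonincreasing order, 0-indexed:
`sv M 0 ≥ sv M 1 ≥ …` are the singular values (square roots of the eigenvalues of `Mᵀ M`). -/
noncomputable def sv {n m : ℕ} (M : Matrix (Fin n) (Fin m) ℝ) (i : ℕ) : ℝ :=
  (((List.ofFn fun j : Fin m =>
      Real.sqrt ((show (Mᵀ * M).IsHermitian from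
        Matrix.conjTranspose_eq_transpose_of_trivial M ▸
          Matrix.isHermitian_conjTranspose_mul_self M).eigenvalues j)).mergeSort
      (fun a b => decide (a ≥ b))).getD i 0)

/-- Trace inner product `⟨M, Y⟩ = tr (Mᵀ Y)`. -/
def ip {n m : ℕ} (M Y : Matrix (Fin n) (Fin m) ℝ) : ℝ := ∑ i, ∑ j, M i j * Y i j

/-- Frobenius norm. -/
noncomputable def fro {n m : ℕ} (M : Matrix (Fin n) (Fin m) ℝ) : ℝ :=
  Real.sqrt (∑ i, ∑ j, M i j ^ 2)

/-- Truncated Frobenius norm `‖M‖_{F,r} = sqrt (σ₁² + ⋯ + σᵣ²)`. -/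
noncomputable def truncFro {n m : ℕ} (r : ℕ) (M : Matrix (Fin n) (Fin m) ℝ) : ℝ :=
  Real.sqrt (∑ i ∈ Finset.range r, sv M i ^ 2)

/-- Dual norm with respect to the trace inner product. -/
noncomputable def dualNorm {n m : ℕ} (ν : Matrix (Fin n) (Fin m) ℝ → ℝ)
    (M : Matrix (Fin n) (Fin m) ℝ) : ℝ :=
  sSup {c : ℝ | ∃ Y, ν Y ≤ 1 ∧ c = ip M Y}

/-- Low-rank inducing Frobenius norm `‖·‖_{F,r*}`, the dual of `‖·‖_{F,r}`. -/
noncomputable def lowRankFro {n m : ℕ} (r : ℕ) (M : Matrix (Fin n) (Fin m) ℝ) : ℝ :=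
  dualNorm (truncFro r) M

/-- Ky Fan `r`-norm: sum of the `r` largest singular values. -/
noncomputable def kyFan {n m : ℕ} (r : ℕ) (M : Matrix (Fin n) (Fin m) ℝ) : ℝ :=
  ∑ i ∈ Finset.range r, sv M i

/-- Nuclear norm: sum of all singular values. -/
noncomputable def nuclear {n m : ℕ} (M : Matrix (Fin n) (Fin m) ℝ) : ℝ :=
  ∑ i ∈ Finset.range (min n m), sv M i

/-- Fenchel conjugate (with trace inner product) of an extended-real-valued function. -/
noncomputable def fconj {n m : ℕ} (f : Matrix (Fin n) (Fin m) ℝ → EReal)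
    (Y : Matrix (Fin n) (Fin m) ℝ) : EReal :=
  ⨆ M, ((ip M Y : ℝ) : EReal) - f M

/-- `f(M) = ½‖M‖_F² + χ_{rank M ≤ r}(M)`. -/
noncomputable def fRank {n m : ℕ} (r : ℕ) (M : Matrix (Fin n) (Fin m) ℝ) : EReal :=
  if M.rank ≤ r then ((2⁻¹ * fro M ^ 2 : ℝ) : EReal) else ⊤

/-! ### Auxiliary infrastructure -/

section Aux

noncomputable section

lemma exists_sort_perm {m : ℕ} (f : Fin m → ℝ) :
    ∃ e : Equiv.Perm (Fin m), Antitone (f ∘ e) ∧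
      ∀ i : ℕ, ((List.ofFn f).mergeSort (fun a b => decide (a ≥ b))).getD i 0 =
        if h : i < m then f (e ⟨i, h⟩) else 0 := by
  classical
  set σ := Tuple.sort f with hσ
  refine ⟨(Fin.revPerm).trans σ, ?_, ?_⟩
  · intro i j hij
    have hmono := Tuple.monotone_sort f
    exact hmono (by simpa [Fin.rev_le_rev] using hij)
  · have hperm : List.Perm ((List.ofFn f).mergeSort (fun a b => decide (a ≥ b)))
        (List.ofFn (f ∘ (Fin.revPerm.trans σ))) := by
      exact ((List.mergeSort_perm _ _).trans (Equiv.Perm.ofFn_comp_perm (Fin.revPerm.trans σ) f).symm)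
    have hsorted1 : ((List.ofFn f).mergeSort (fun a b => decide (a ≥ b))).Pairwise (· ≥ ·) := by
      have := List.pairwise_mergeSort (le := fun a b : ℝ => decide (a ≥ b))
        (by intro a b c hab hbc; simp only [decide_eq_true_eq] at *; exact le_trans hbc hab)
        (by intro a b; simpa using le_total b a) (List.ofFn f)
      exact this.imp (by simp)
    have hsorted2 : (List.ofFn (f ∘ (Fin.revPerm.trans σ))).Pairwise (· ≥ ·) := by
      rw [List.pairwise_ofFn]
      intro i j hij
      exact (Tuple.monotone_sort f) (by simpa [Fin.rev_le_rev] using hij.le)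
    have heq : (List.ofFn f).mergeSort (fun a b => decide (a ≥ b)) =
        List.ofFn (f ∘ (Fin.revPerm.trans σ)) :=
      List.Perm.eq_of_pairwise' (r := (· ≥ ·)) hsorted1 hsorted2 hperm
    intro i
    rw [heq]
    by_cases h : i < m
    · rw [dif_pos h, List.getD_eq_getElem _ _ (by simpa using h)]
      simp
    · rw [dif_neg h, List.getD_eq_default _ _ (by simpa using Nat.le_of_not_lt h)]

variable {n m : ℕ} (Y : Matrix (Fin n) (Fin m) ℝ)

lemma hT : (Yᵀ * Y).IsHermitian :=
  Matrix.conjTranspose_eq_transpose_of_trivial Y ▸ Matrix.isHermitian_conjTranspose_mul_self Y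

/-- eigenvalues of `Yᵀ Y`. -/
def evs : Fin m → ℝ := (hT Y).eigenvalues

/-- orthonormal eigenbasis of `Yᵀ Y`. -/
def evec : OrthonormalBasis (Fin m) ℝ (EuclideanSpace ℝ (Fin m)) :=
  (hT Y).eigenvectorBasis

lemma evs_nonneg (j : Fin m) : 0 ≤ evs Y j := by
  have h : (Yᵀ * Y).PosSemidef := by
    have := Matrix.posSemidef_conjTranspose_mul_self Y
    rwa [Matrix.conjTranspose_eq_transpose_of_trivial] at this
  exact h.eigenvalues_nonneg j

def svPerm : Equiv.Perm (Fin m) :=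
  (exists_sort_perm fun j => Real.sqrt (evs Y j)).choose

lemma sv_dite (i : ℕ) :
    sv Y i = if h : i < m then Real.sqrt (evs Y (svPerm Y ⟨i, h⟩)) else 0 :=
  (exists_sort_perm fun j => Real.sqrt (evs Y j)).choose_spec.2 i

lemma sv_eq_of_lt {i : ℕ} (h : i < m) :
    sv Y i = Real.sqrt (evs Y (svPerm Y ⟨i, h⟩)) := by rw [sv_dite, dif_pos h]

lemma sv_eq_of_ge {i : ℕ} (h : m ≤ i) : sv Y i = 0 := by
  rw [sv_dite, dif_neg (Nat.not_lt.2 h)]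

lemma sv_nonneg (i : ℕ) : 0 ≤ sv Y i := by
  rw [sv_dite]; split
  · exact Real.sqrt_nonneg _
  · exact le_refl 0

lemma sv_antitone {i j : ℕ} (hij : i ≤ j) : sv Y j ≤ sv Y i := by
  by_cases hj : j < m
  · have hi : i < m := lt_of_le_of_lt hij hj
    rw [sv_eq_of_lt Y hi, sv_eq_of_lt Y hj]
    exact (exists_sort_perm fun j => Real.sqrt (evs Y j)).choose_spec.1
      (show (⟨i, hi⟩ : Fin m) ≤ ⟨j, hj⟩ from hij)
  · rw [sv_eq_of_ge Y (Nat.le_of_not_lt hj)]; exact sv_nonneg Y i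

lemma sv_sq_eq {i : ℕ} (h : i < m) :
    sv Y i ^ 2 = evs Y (svPerm Y ⟨i, h⟩) := by
  rw [sv_eq_of_lt Y h, Real.sq_sqrt (evs_nonneg Y _)]

lemma sum_sv_g (g : ℝ → ℝ) :
    ∑ i ∈ range m, g (sv Y i) = ∑ j, g (Real.sqrt (evs Y j)) := by
  rw [← Fin.sum_univ_eq_sum_range]
  rw [← Equiv.sum_comp (svPerm Y) (fun j => g (Real.sqrt (evs Y j)))]
  refine Finset.sum_congr rfl fun i _ => ?_
  rw [sv_eq_of_lt Y i.isLt]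

lemma sum_sv_sq : ∑ i ∈ range m, sv Y i ^ 2 = ∑ j, evs Y j := by
  rw [sum_sv_g Y (fun x => x ^ 2)]
  exact Finset.sum_congr rfl fun j _ => Real.sq_sqrt (evs_nonneg Y j)

lemma threshold {r : ℕ} (hrm : r ≤ m) (c : Fin m → ℝ)
    (hc0 : ∀ j, 0 ≤ c j) (hc1 : ∀ j, c j ≤ 1) (hcs : ∑ j, c j ≤ (r : ℝ)) :
    ∑ j, evs Y j * c j ≤ ∑ i ∈ range r, sv Y i ^ 2 := by
  classical
  set q : ℕ → ℝ := fun i => sv Y i ^ 2 with hq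
  have hq_anti : ∀ {i j : ℕ}, i ≤ j → q j ≤ q i := fun {i j} h =>
    pow_le_pow_left₀ (sv_nonneg Y j) (sv_antitone Y h) 2
  have hq_nonneg : ∀ i, 0 ≤ q i := fun i => sq_nonneg _
  set θ : ℝ := q (r - 1) with hθ
  have hθ0 : 0 ≤ θ := hq_nonneg _
  set c' : Fin m → ℝ := fun i => c (svPerm Y i) with hc'
  have h1 : ∑ j, evs Y j * c j = ∑ i : Fin m, q i.val * c' i := by
    rw [← Equiv.sum_comp (svPerm Y) (fun j => evs Y j * c j)]
    refine Finset.sum_congr rfl fun i _ => ?_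
    congr 1
    have := sv_sq_eq Y i.isLt
    simp only [Fin.eta] at this
    exact this.symm
  have h2 : ∀ i : Fin m, q i.val * c' i ≤ θ * c' i + max (q i.val - θ) 0 := by
    intro i
    rcases le_total (q i.val) θ with h | h
    · have := mul_le_mul_of_nonneg_right h (hc0 (svPerm Y i))
      have h0 : (0:ℝ) ≤ max (q i.val - θ) 0 := le_max_right _ _
      nlinarith
    · have hmx : max (q i.val - θ) 0 = q i.val - θ := max_eq_left (by linarith)
      have := hc1 (svPerm Y i)
      have := hc0 (svPerm Y i)
      nlinarith
  have h3 : ∑ i : Fin m, c' i = ∑ j, c j := Equiv.sum_comp (svPerm Y) c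
  have h4 : ∑ i : Fin m, max (q i.val - θ) 0 = ∑ i ∈ range r, (q i - θ) := by
    rw [Fin.sum_univ_eq_sum_range (fun i => max (q i - θ) 0)]
    rw [← Finset.sum_subset (Finset.range_subset_range.2 hrm)
      (fun x _ hx => ?_)]
    · exact Finset.sum_congr rfl fun i hi => max_eq_left (sub_nonneg.2 (hq_anti
        (Nat.le_sub_one_of_lt (Finset.mem_range.1 hi))))
    · have : r ≤ x := Nat.le_of_not_lt (fun h => hx (Finset.mem_range.2 h))
      have : q x ≤ θ := hq_anti (le_trans (Nat.sub_le r 1) this)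
      simpa [max_eq_right] using sub_nonpos.2 this
  calc ∑ j, evs Y j * c j = ∑ i : Fin m, q i.val * c' i := h1
    _ ≤ ∑ i : Fin m, (θ * c' i + max (q i.val - θ) 0) := Finset.sum_le_sum fun i _ => h2 i
    _ = θ * (∑ j, c j) + ∑ i ∈ range r, (q i - θ) := by
        rw [Finset.sum_add_distrib, ← Finset.mul_sum, h3, h4]
    _ ≤ θ * r + (∑ i ∈ range r, q i - r * θ) := by
        rw [Finset.sum_sub_distrib]
        simp only [Finset.sum_const, Finset.card_range, nsmul_eq_mul]
        have := mul_le_mul_of_nonneg_left hcs hθ0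
        linarith
    _ ≤ ∑ i ∈ range r, q i := by linarith

/-- entrywise spectral decomposition -/
lemma entry_spectral (a b : Fin m) :
    (Yᵀ * Y) a b = ∑ j, evs Y j * (evec Y j a * evec Y j b) := by
  have hsp := (hT Y).spectral_theorem
  have h2 : (Yᵀ * Y) a b = (Yᴴ * Y) a b := by
    rw [Matrix.conjTranspose_eq_transpose_of_trivial]
  calc (Yᵀ * Y) a b
      = ((((hT Y).eigenvectorUnitary : Matrix (Fin m) (Fin m) ℝ) *
          Matrix.diagonal (RCLike.ofReal ∘ (hT Y).eigenvalues) *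
          (star ((hT Y).eigenvectorUnitary : Matrix (Fin m) (Fin m) ℝ))) : Matrix (Fin m) (Fin m) ℝ) a b := by
        rw [h2]; exact congrFun (congrFun hsp a) b
    _ = ∑ j, evs Y j * (evec Y j a * evec Y j b) := by
        rw [Matrix.mul_apply]
        simp only [Matrix.mul_apply, Matrix.diagonal, Matrix.of_apply, Matrix.star_apply,
          Finset.sum_ite_eq, Finset.mem_univ, if_true]
        refine Finset.sum_congr rfl fun j _ => ?_
        simp [Matrix.IsHermitian.eigenvectorUnitary_apply, evs, evec, star, mul_comm, mul_assoc,
          mul_left_comm]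

lemma orthonormal_sum_mul {k : ℕ} {w : Fin k → EuclideanSpace ℝ (Fin m)}
    (hw : Orthonormal ℝ w) (l l' : Fin k) :
    ∑ a, w l a * w l' a = if l = l' then 1 else 0 := by
  have := orthonormal_iff_ite.mp hw l l'
  rw [PiLp.inner_apply] at this
  rw [← this]
  exact Finset.sum_congr rfl fun a _ => by simp [mul_comm]

lemma evec_sum_mul (j j' : Fin m) :
    ∑ a, evec Y j a * evec Y j' a = if j = j' then 1 else 0 :=
  orthonormal_sum_mul (evec Y).orthonormal j j'

lemma inner_eq_sum (x y : EuclideanSpace ℝ (Fin m)) :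
    (inner ℝ x y : ℝ) = ∑ a, x a * y a := by
  rw [PiLp.inner_apply]; exact Finset.sum_congr rfl fun a _ => by simp [mul_comm]

lemma bessel {k : ℕ} {w : Fin k → EuclideanSpace ℝ (Fin m)}
    (hw : Orthonormal ℝ w) (x : EuclideanSpace ℝ (Fin m)) (hx : ‖x‖ = 1) :
    ∑ l, (∑ a, x a * w l a) ^ 2 ≤ 1 := by
  have h := hw.sum_inner_products_le (𝕜 := ℝ) (x := x) (s := Finset.univ)
  rw [hx] at h
  calc ∑ l, (∑ a, x a * w l a) ^ 2 = ∑ l, ‖(inner ℝ (w l) x : ℝ)‖ ^ 2 := by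
        refine Finset.sum_congr rfl fun l _ => ?_
        rw [Real.norm_eq_abs, sq_abs, inner_eq_sum]
        refine congrArg (· ^ 2) (Finset.sum_congr rfl fun a _ => mul_comm _ _)
    _ ≤ 1 ^ 2 := h
    _ = 1 := one_pow 2

lemma parseval_norm {k : ℕ} {w : Fin k → EuclideanSpace ℝ (Fin m)}
    (hw : Orthonormal ℝ w) (l : Fin k) :
    ∑ j, (∑ a, evec Y j a * w l a) ^ 2 = 1 := by
  have h := (evec Y).sum_inner_mul_inner (w l) (w l)
  have h2 : (inner ℝ (w l) (w l) : ℝ) = 1 := by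
    rw [real_inner_self_eq_norm_sq, hw.1 l, one_pow]
  rw [h2] at h
  calc ∑ j, (∑ a, evec Y j a * w l a) ^ 2
      = ∑ j, (inner ℝ (w l) (evec Y j) : ℝ) * (inner ℝ (evec Y j) (w l) : ℝ) := by
        refine Finset.sum_congr rfl fun j _ => ?_
        rw [inner_eq_sum, inner_eq_sum, sq]
        rw [show ∑ a, (w l) a * (evec Y j) a = ∑ a, (evec Y j) a * (w l) a from
          Finset.sum_congr rfl fun a _ => mul_comm _ _]
    _ = 1 := h

lemma sum_sum_comm {ι κ M : Type*} [AddCommMonoid M] [Fintype ι] [Fintype κ]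
    (f : ι → κ → M) : ∑ i, ∑ j, f i j = ∑ j, ∑ i, f i j := Finset.sum_comm

lemma sum4_swap {α β γ δ M : Type*} [AddCommMonoid M] [Fintype α] [Fintype β]
    [Fintype γ] [Fintype δ] (f : α → β → γ → δ → M) :
    ∑ a, ∑ b, ∑ c, ∑ d, f a b c d = ∑ c, ∑ d, ∑ a, ∑ b, f a b c d := by
  calc ∑ a, ∑ b, ∑ c, ∑ d, f a b c d
      = ∑ a, ∑ c, ∑ b, ∑ d, f a b c d :=
        Finset.sum_congr rfl fun a _ => sum_sum_comm _
    _ = ∑ c, ∑ a, ∑ b, ∑ d, f a b c d := sum_sum_comm _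
    _ = ∑ c, ∑ a, ∑ d, ∑ b, f a b c d :=
        Finset.sum_congr rfl fun c _ => Finset.sum_congr rfl fun a _ => sum_sum_comm _
    _ = ∑ c, ∑ d, ∑ a, ∑ b, f a b c d :=
        Finset.sum_congr rfl fun c _ => sum_sum_comm _

lemma sum3_swap {α β γ M : Type*} [AddCommMonoid M] [Fintype α] [Fintype β]
    [Fintype γ] (f : α → β → γ → M) :
    ∑ a, ∑ b, ∑ c, f a b c = ∑ c, ∑ b, ∑ a, f a b c := by
  calc ∑ a, ∑ b, ∑ c, f a b c
      = ∑ a, ∑ c, ∑ b, f a b c := Finset.sum_congr rfl fun a _ => sum_sum_comm _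
    _ = ∑ c, ∑ a, ∑ b, f a b c := sum_sum_comm _
    _ = ∑ c, ∑ b, ∑ a, f a b c := Finset.sum_congr rfl fun c _ => sum_sum_comm _

/-- the master algebraic identity -/
lemma master {k : ℕ} (w : Fin k → EuclideanSpace ℝ (Fin m)) :
    ∑ a, ∑ b, (Yᵀ * Y) a b * (∑ l, w l a * w l b)
      = ∑ j, evs Y j * ∑ l, (∑ a, evec Y j a * w l a) ^ 2 := by
  simp only [entry_spectral Y]
  calc ∑ a, ∑ b, (∑ j, evs Y j * (evec Y j a * evec Y j b)) * (∑ l, w l a * w l b)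
      = ∑ a, ∑ b, ∑ j, ∑ l, (evs Y j * (evec Y j a * evec Y j b)) * (w l a * w l b) :=
        Finset.sum_congr rfl fun a _ => Finset.sum_congr rfl fun b _ =>
          Finset.sum_mul_sum _ _ _ _
    _ = ∑ j, ∑ l, ∑ a, ∑ b, (evs Y j * (evec Y j a * evec Y j b)) * (w l a * w l b) :=
        sum4_swap _
    _ = ∑ j, evs Y j * ∑ l, (∑ a, evec Y j a * w l a) ^ 2 := by
        refine Finset.sum_congr rfl fun j _ => ?_
        simp only [sq, Finset.sum_mul_sum, Finset.mul_sum, Finset.sum_mul]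
        refine Finset.sum_congr rfl fun l _ => Finset.sum_congr rfl fun a _ =>
          Finset.sum_congr rfl fun b _ => by ring

/-- upper bound for the trace against a sub-orthonormal projection -/
lemma traceQ_le {r k : ℕ} (hrm : r ≤ m) (hk : k ≤ r)
    {w : Fin k → EuclideanSpace ℝ (Fin m)} (hw : Orthonormal ℝ w) :
    ∑ a, ∑ b, (Yᵀ * Y) a b * (∑ l, w l a * w l b) ≤ ∑ i ∈ range r, sv Y i ^ 2 := by
  rw [master]
  refine threshold Y hrm (fun j => ∑ l, (∑ a, evec Y j a * w l a) ^ 2) ?_ ?_ ?_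
  · exact fun j => Finset.sum_nonneg fun l _ => sq_nonneg _
  · exact fun j => bessel hw (evec Y j) ((evec Y).orthonormal.1 j)
  · rw [sum_sum_comm]
    calc ∑ l, ∑ j, (∑ a, evec Y j a * w l a) ^ 2 = ∑ l : Fin k, (1:ℝ) :=
          Finset.sum_congr rfl fun l _ => parseval_norm Y hw l
      _ = (k : ℝ) := by simp
      _ ≤ (r : ℝ) := by exact_mod_cast hk

/-- attainment of the trace bound by the top-r eigenvectors -/
lemma traceQ_attain {r : ℕ} (hrm : r ≤ m) :
    Orthonormal ℝ (fun i : Fin r => evec Y (svPerm Y (Fin.castLE hrm i))) ∧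
    ∑ a, ∑ b, (Yᵀ * Y) a b *
        (∑ l : Fin r, evec Y (svPerm Y (Fin.castLE hrm l)) a * evec Y (svPerm Y (Fin.castLE hrm l)) b)
      = ∑ i ∈ range r, sv Y i ^ 2 := by
  constructor
  · exact (evec Y).orthonormal.comp _ ((svPerm Y).injective.comp (Fin.castLE_injective hrm))
  · rw [master]
    have hinner : ∀ (j : Fin m) (l : Fin r),
        ∑ a, evec Y j a * evec Y (svPerm Y (Fin.castLE hrm l)) a =
          if j = svPerm Y (Fin.castLE hrm l) then 1 else 0 :=
      fun j l => evec_sum_mul Y j _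
    calc ∑ j, evs Y j * ∑ l : Fin r, (∑ a, evec Y j a * evec Y (svPerm Y (Fin.castLE hrm l)) a) ^ 2
        = ∑ j, ∑ l : Fin r, (if j = svPerm Y (Fin.castLE hrm l) then evs Y j else 0) := by
          refine Finset.sum_congr rfl fun j _ => ?_
          rw [Finset.mul_sum]
          refine Finset.sum_congr rfl fun l _ => ?_
          rw [hinner j l]
          by_cases h : j = svPerm Y (Fin.castLE hrm l) <;> simp [h]
      _ = ∑ l : Fin r, ∑ j, (if j = svPerm Y (Fin.castLE hrm l) then evs Y j else 0) :=
          sum_sum_comm _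
      _ = ∑ l : Fin r, evs Y (svPerm Y (Fin.castLE hrm l)) := by
          refine Finset.sum_congr rfl fun l _ => ?_
          rw [Finset.sum_ite_eq' Finset.univ (svPerm Y (Fin.castLE hrm l)) (evs Y)]
          simp
      _ = ∑ l : Fin r, sv Y (l : ℕ) ^ 2 := by
          refine Finset.sum_congr rfl fun l _ => ?_
          exact (sv_sq_eq Y (lt_of_lt_of_le l.isLt hrm)).symm
      _ = ∑ i ∈ range r, sv Y i ^ 2 := Fin.sum_univ_eq_sum_range (fun i => sv Y i ^ 2) r

lemma fro_nonneg (M : Matrix (Fin n) (Fin m) ℝ) : 0 ≤ fro M := Real.sqrt_nonneg _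

lemma fro_sq (M : Matrix (Fin n) (Fin m) ℝ) : fro M ^ 2 = ∑ i, ∑ j, M i j ^ 2 :=
  Real.sq_sqrt (Finset.sum_nonneg fun i _ => Finset.sum_nonneg fun j _ => sq_nonneg _)

lemma truncFro_nonneg (r : ℕ) (M : Matrix (Fin n) (Fin m) ℝ) : 0 ≤ truncFro r M :=
  Real.sqrt_nonneg _

lemma truncFro_sq (r : ℕ) (M : Matrix (Fin n) (Fin m) ℝ) :
    truncFro r M ^ 2 = ∑ i ∈ range r, sv M i ^ 2 :=
  Real.sq_sqrt (Finset.sum_nonneg fun i _ => sq_nonneg _)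

lemma sum_evs_eq : ∑ j, evs Y j = ∑ i, ∑ j, Y i j ^ 2 := by
  have h1 : ∑ a, (Yᵀ * Y) a a = ∑ j, evs Y j := by
    calc ∑ a, (Yᵀ * Y) a a = ∑ a, ∑ j, evs Y j * (evec Y j a * evec Y j a) :=
          Finset.sum_congr rfl fun a _ => entry_spectral Y a a
      _ = ∑ j, evs Y j * ∑ a, evec Y j a * evec Y j a := by
          rw [sum_sum_comm]
          exact Finset.sum_congr rfl fun j _ => (Finset.mul_sum _ _ _).symm
      _ = ∑ j, evs Y j := by
          refine Finset.sum_congr rfl fun j _ => ?_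
          rw [evec_sum_mul Y j j, if_pos rfl, mul_one]
  have h2 : ∑ a, (Yᵀ * Y) a a = ∑ i, ∑ j, Y i j ^ 2 := by
    calc ∑ a, (Yᵀ * Y) a a = ∑ a, ∑ i, Y i a * Y i a :=
          Finset.sum_congr rfl fun a _ => by
            rw [Matrix.mul_apply]
            exact Finset.sum_congr rfl fun i _ => by rw [Matrix.transpose_apply]
      _ = ∑ i, ∑ a, Y i a ^ 2 := by
          rw [sum_sum_comm]
          exact Finset.sum_congr rfl fun i _ => Finset.sum_congr rfl fun a _ => (sq _).symm
  rw [← h1, h2]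

lemma fro_sq_eq_sum_sv : fro Y ^ 2 = ∑ i ∈ range m, sv Y i ^ 2 := by
  rw [fro_sq, sum_sv_sq, sum_evs_eq]

lemma fro_le_sqrt_mul_truncFro {r : ℕ} (hr1 : 1 ≤ r) (hrm : r ≤ m) :
    fro Y ≤ Real.sqrt m * truncFro r Y := by
  have h1 : ∑ i ∈ range m, sv Y i ^ 2 ≤ (m : ℝ) * (∑ i ∈ range r, sv Y i ^ 2) := by
    have hstep : ∀ i ∈ range m, sv Y i ^ 2 ≤ ∑ i ∈ range r, sv Y i ^ 2 := by
      intro i _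
      have h0 : sv Y i ^ 2 ≤ sv Y 0 ^ 2 :=
        pow_le_pow_left₀ (sv_nonneg Y i) (sv_antitone Y (Nat.zero_le i)) 2
      have : sv Y 0 ^ 2 ≤ ∑ i ∈ range r, sv Y i ^ 2 :=
        Finset.single_le_sum (f := fun i => sv Y i ^ 2) (fun i _ => sq_nonneg _)
          (Finset.mem_range.2 hr1)
      linarith
    calc ∑ i ∈ range m, sv Y i ^ 2 ≤ ∑ _i ∈ range m, (∑ i ∈ range r, sv Y i ^ 2) :=
          Finset.sum_le_sum hstep
      _ = (m : ℝ) * (∑ i ∈ range r, sv Y i ^ 2) := by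
          rw [Finset.sum_const, Finset.card_range, nsmul_eq_mul]
  calc fro Y = Real.sqrt (fro Y ^ 2) := (Real.sqrt_sq (fro_nonneg Y)).symm
    _ ≤ Real.sqrt ((m : ℝ) * (∑ i ∈ range r, sv Y i ^ 2)) := by
        apply Real.sqrt_le_sqrt
        rw [fro_sq_eq_sum_sv]
        exact h1
    _ = Real.sqrt m * truncFro r Y := by
        rw [Real.sqrt_mul (Nat.cast_nonneg m), truncFro]

lemma ip_le_fro_mul_fro (M Z : Matrix (Fin n) (Fin m) ℝ) : ip M Z ≤ fro M * fro Z := by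
  have key := Finset.sum_mul_sq_le_sq_mul_sq Finset.univ
    (fun p : Fin n × Fin m => M p.1 p.2) (fun p : Fin n × Fin m => Z p.1 p.2)
  have hip : ip M Z = ∑ p : Fin n × Fin m, M p.1 p.2 * Z p.1 p.2 := by
    rw [ip, ← Fintype.sum_prod_type']
  have hM : fro M = Real.sqrt (∑ p : Fin n × Fin m, M p.1 p.2 ^ 2) := by
    rw [fro, ← Fintype.sum_prod_type']
  have hZ : fro Z = Real.sqrt (∑ p : Fin n × Fin m, Z p.1 p.2 ^ 2) := by
    rw [fro, ← Fintype.sum_prod_type']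
  rw [hip, hM, hZ, ← Real.sqrt_mul (Finset.sum_nonneg fun p _ => sq_nonneg _)]
  calc ∑ p : Fin n × Fin m, M p.1 p.2 * Z p.1 p.2
      ≤ |∑ p : Fin n × Fin m, M p.1 p.2 * Z p.1 p.2| := le_abs_self _
    _ = Real.sqrt ((∑ p : Fin n × Fin m, M p.1 p.2 * Z p.1 p.2) ^ 2) :=
        (Real.sqrt_sq_eq_abs _).symm
    _ ≤ Real.sqrt ((∑ p : Fin n × Fin m, M p.1 p.2 ^ 2) * ∑ p : Fin n × Fin m, Z p.1 p.2 ^ 2) :=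
        Real.sqrt_le_sqrt key


lemma YQ_ip {k : ℕ} (w : Fin k → EuclideanSpace ℝ (Fin m)) :
    ip (fun i j => ∑ b, Y i b * (∑ l, w l b * w l j)) Y
      = ∑ a, ∑ b, (Yᵀ * Y) a b * (∑ l, w l a * w l b) := by
  calc ip (fun i j => ∑ b, Y i b * (∑ l, w l b * w l j)) Y
      = ∑ i, ∑ j, ∑ b, (Y i b * (∑ l, w l b * w l j)) * Y i j := by
        unfold ip
        exact Finset.sum_congr rfl fun i _ => Finset.sum_congr rfl fun j _ =>
          Finset.sum_mul _ _ _
    _ = ∑ b, ∑ j, ∑ i, (Y i b * (∑ l, w l b * w l j)) * Y i j := sum3_swap _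
    _ = ∑ a, ∑ b, (Yᵀ * Y) a b * (∑ l, w l a * w l b) := by
        refine Finset.sum_congr rfl fun a _ => Finset.sum_congr rfl fun b _ => ?_
        rw [Matrix.mul_apply, Finset.sum_mul]
        refine Finset.sum_congr rfl fun i _ => ?_
        rw [Matrix.transpose_apply]
        ring

lemma YQ_fro {k : ℕ} (w : Fin k → EuclideanSpace ℝ (Fin m)) (hw : Orthonormal ℝ w) :
    fro (fun i j => ∑ b, Y i b * (∑ l, w l b * w l j)) ^ 2
      = ∑ a, ∑ b, (Yᵀ * Y) a b * (∑ l, w l a * w l b) := by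
  have hQQ : ∀ a b : Fin m, ∑ j, (∑ l, w l a * w l j) * (∑ l, w l b * w l j)
      = ∑ l, w l a * w l b := by
    intro a b
    calc ∑ j, (∑ l, w l a * w l j) * (∑ l', w l' b * w l' j)
        = ∑ j, ∑ l, ∑ l', (w l a * w l j) * (w l' b * w l' j) :=
          Finset.sum_congr rfl fun j _ => by
            rw [Finset.sum_mul_sum]
      _ = ∑ l', ∑ l, ∑ j, (w l a * w l j) * (w l' b * w l' j) := sum3_swap _
      _ = ∑ l', ∑ l, (w l a * w l' b) * (∑ j, w l j * w l' j) := by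
          refine Finset.sum_congr rfl fun l' _ => Finset.sum_congr rfl fun l _ => ?_
          rw [Finset.mul_sum]
          exact Finset.sum_congr rfl fun j _ => by ring
      _ = ∑ l', ∑ l, (if l = l' then w l a * w l' b else 0) := by
          refine Finset.sum_congr rfl fun l' _ => Finset.sum_congr rfl fun l _ => ?_
          rw [orthonormal_sum_mul hw l l']
          by_cases h : l = l' <;> simp [h]
      _ = ∑ l, w l a * w l b := by
          rw [sum_sum_comm]
          refine Finset.sum_congr rfl fun l _ => ?_
          rw [Finset.sum_ite_eq Finset.univ l (fun l' => w l a * w l' b)]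
          simp
  calc fro (fun i j => ∑ b, Y i b * (∑ l, w l b * w l j)) ^ 2
      = ∑ i, ∑ j, (∑ a, Y i a * (∑ l, w l a * w l j)) * (∑ b, Y i b * (∑ l, w l b * w l j)) := by
        refine (fro_sq _).trans ?_
        exact Finset.sum_congr rfl fun i _ => Finset.sum_congr rfl fun j _ => sq _
    _ = ∑ i, ∑ j, ∑ a, ∑ b, (Y i a * (∑ l, w l a * w l j)) * (Y i b * (∑ l, w l b * w l j)) :=
        Finset.sum_congr rfl fun i _ => Finset.sum_congr rfl fun j _ =>
          Finset.sum_mul_sum _ _ _ _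
    _ = ∑ a, ∑ b, ∑ i, ∑ j, (Y i a * (∑ l, w l a * w l j)) * (Y i b * (∑ l, w l b * w l j)) :=
        sum4_swap _
    _ = ∑ a, ∑ b, (∑ i, Y i a * Y i b) * (∑ j, (∑ l, w l a * w l j) * (∑ l, w l b * w l j)) := by
        refine Finset.sum_congr rfl fun a _ => Finset.sum_congr rfl fun b _ => ?_
        rw [Finset.sum_mul_sum]
        exact Finset.sum_congr rfl fun i _ => Finset.sum_congr rfl fun j _ => by ring
    _ = ∑ a, ∑ b, (Yᵀ * Y) a b * (∑ l, w l a * w l b) := by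
        refine Finset.sum_congr rfl fun a _ => Finset.sum_congr rfl fun b _ => ?_
        rw [hQQ a b, Matrix.mul_apply]
        congr 1

lemma exists_proj_family {r : ℕ} (M : Matrix (Fin n) (Fin m) ℝ) (hM : M.rank ≤ r) :
    ∃ (k : ℕ) (w : Fin k → EuclideanSpace ℝ (Fin m)), k ≤ r ∧ Orthonormal ℝ w ∧
      ∀ i j, ∑ b, M i b * (∑ l, w l b * w l j) = M i j := by
  classical
  set e : (Fin m → ℝ) ≃ₗ[ℝ] EuclideanSpace ℝ (Fin m) :=
    (WithLp.linearEquiv 2 ℝ (Fin m → ℝ)).symm with he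
  set V : Submodule ℝ (EuclideanSpace ℝ (Fin m)) :=
    (Submodule.span ℝ (Set.range M)).map (e : (Fin m → ℝ) →ₗ[ℝ] EuclideanSpace ℝ (Fin m)) with hV
  have hfin : Module.finrank ℝ V ≤ r := by
    have h := LinearEquiv.finrank_map_eq (R := ℝ) e (Submodule.span ℝ (Set.range M))
    rw [hV]
    refine le_of_eq_of_le ?_ (le_of_eq_of_le (Matrix.rank_eq_finrank_span_row M).symm hM)
    exact h
  set b := stdOrthonormalBasis ℝ V with hb
  have hkr : Module.finrank ℝ V ≤ r := hfin
  set w : Fin (Module.finrank ℝ V) → EuclideanSpace ℝ (Fin m) :=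
    fun l => ((b l : V) : EuclideanSpace ℝ (Fin m)) with hwdef
  have hworth : Orthonormal ℝ w := by
    rw [orthonormal_iff_ite]
    intro l l'
    rw [hwdef]
    simp only
    rw [← Submodule.coe_inner]
    exact orthonormal_iff_ite.mp b.orthonormal l l'
  refine ⟨Module.finrank ℝ V, w, hfin, hworth, ?_⟩
  intro i j
  have hmem : e (M i) ∈ V := Submodule.mem_map_of_mem (Submodule.subset_span ⟨i, rfl⟩)
  set v : V := ⟨e (M i), hmem⟩ with hvdef
  have key : e (M i) = ∑ l, (inner ℝ (w l) (e (M i)) : ℝ) • w l := by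
    have hrepr := b.sum_repr' v
    calc e (M i) = ((v : V) : EuclideanSpace ℝ (Fin m)) := rfl
      _ = (((∑ l, (inner ℝ (b l) v : ℝ) • b l : V)) : EuclideanSpace ℝ (Fin m)) := by
          rw [hrepr]
      _ = ∑ l, (inner ℝ (b l) v : ℝ) • ((b l : V) : EuclideanSpace ℝ (Fin m)) := by
          push_cast
          rfl
      _ = ∑ l, (inner ℝ (w l) (e (M i)) : ℝ) • w l := by
          refine Finset.sum_congr rfl fun l _ => ?_
          rw [Submodule.coe_inner]
  have hcomp : M i j = ∑ l, (∑ a, w l a * M i a) * w l j := by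
    have h1 : M i j = (e (M i)) j := rfl
    have h2 : ∀ x : EuclideanSpace ℝ (Fin m), x j =
        (inner ℝ (EuclideanSpace.single j (1:ℝ)) x : ℝ) := fun x => by
      rw [EuclideanSpace.inner_single_left]
      simp
    rw [h1, h2 (e (M i)), key, inner_sum]
    refine Finset.sum_congr rfl fun l _ => ?_
    rw [real_inner_smul_right, ← h2]
    congr 1
    exact inner_eq_sum _ _
  calc ∑ bb, M i bb * (∑ l, w l bb * w l j)
      = ∑ bb, ∑ l, M i bb * (w l bb * w l j) :=
        Finset.sum_congr rfl fun bb _ => Finset.mul_sum _ _ _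
    _ = ∑ l, ∑ bb, M i bb * (w l bb * w l j) := sum_sum_comm _
    _ = ∑ l, (∑ a, w l a * M i a) * w l j := by
        refine Finset.sum_congr rfl fun l _ => ?_
        rw [Finset.sum_mul]
        exact Finset.sum_congr rfl fun a _ => by ring
    _ = M i j := hcomp.symm

lemma ip_rank_le {r : ℕ} (hr1 : 1 ≤ r) (hrm : r ≤ m) (M : Matrix (Fin n) (Fin m) ℝ)
    (hM : M.rank ≤ r) : ip M Y ≤ fro M * truncFro r Y := by
  obtain ⟨k, w, hk, hw, hproj⟩ := exists_proj_family M hM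
  set Z : Matrix (Fin n) (Fin m) ℝ := fun i j => ∑ b, Y i b * (∑ l, w l b * w l j) with hZ
  have h1 : ip M Z = ip M Y := by
    rw [ip, ip]
    refine Finset.sum_congr rfl fun i _ => ?_
    calc ∑ j, M i j * Z i j
        = ∑ j, ∑ b, M i j * (Y i b * (∑ l, w l b * w l j)) := by
          refine Finset.sum_congr rfl fun j _ => ?_
          rw [hZ]
          simp only
          rw [Finset.mul_sum]
      _ = ∑ b, ∑ j, M i j * (Y i b * (∑ l, w l b * w l j)) := sum_sum_comm _
      _ = ∑ b, Y i b * (∑ j, M i j * (∑ l, w l j * w l b)) := by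
          refine Finset.sum_congr rfl fun b _ => ?_
          rw [Finset.mul_sum]
          refine Finset.sum_congr rfl fun j _ => ?_
          rw [show ∑ l, w l b * w l j = ∑ l, w l j * w l b from
            Finset.sum_congr rfl fun l _ => mul_comm _ _]
          ring
      _ = ∑ b, Y i b * M i b := by
          refine Finset.sum_congr rfl fun b _ => ?_
          rw [hproj i b]
      _ = ∑ j, M i j * Y i j := Finset.sum_congr rfl fun b _ => mul_comm _ _
  have h2 : fro Z ^ 2 ≤ truncFro r Y ^ 2 := by
    rw [truncFro_sq, hZ]
    exact le_of_eq_of_le (YQ_fro Y w hw) (traceQ_le Y hrm hk hw)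
  have h3 : fro Z ≤ truncFro r Y := by
    rw [← Real.sqrt_sq (fro_nonneg Z), ← Real.sqrt_sq (truncFro_nonneg r Y)]
    exact Real.sqrt_le_sqrt h2
  calc ip M Y = ip M Z := h1.symm
    _ ≤ fro M * fro Z := ip_le_fro_mul_fro M Z
    _ ≤ fro M * truncFro r Y := mul_le_mul_of_nonneg_left h3 (fro_nonneg M)

lemma exists_attain {r : ℕ} (hrm : r ≤ m) :
    ∃ M₀ : Matrix (Fin n) (Fin m) ℝ, M₀.rank ≤ r ∧
      ip M₀ Y = ∑ i ∈ range r, sv Y i ^ 2 ∧ fro M₀ ^ 2 = ∑ i ∈ range r, sv Y i ^ 2 := by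
  obtain ⟨hw, hval⟩ := traceQ_attain Y hrm
  set w := fun i : Fin r => evec Y (svPerm Y (Fin.castLE hrm i)) with hwdef
  refine ⟨fun i j => ∑ b, Y i b * (∑ l, w l b * w l j), ?_, ?_, ?_⟩
  · set W : Matrix (Fin m) (Fin r) ℝ := Matrix.of (fun a l => w l a) with hW
    have hfac : (fun i j => ∑ b, Y i b * (∑ l, w l b * w l j)) = (Y * W) * Wᵀ := by
      funext i j
      calc ∑ b, Y i b * (∑ l, w l b * w l j)
          = ∑ b, ∑ l, Y i b * (w l b * w l j) :=
            Finset.sum_congr rfl fun b _ => Finset.mul_sum _ _ _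
        _ = ∑ l, ∑ b, Y i b * (w l b * w l j) := sum_sum_comm _
        _ = ∑ l, (∑ b, Y i b * W b l) * Wᵀ l j := by
            refine Finset.sum_congr rfl fun l _ => ?_
            rw [Finset.sum_mul]
            refine Finset.sum_congr rfl fun b _ => ?_
            rw [Matrix.transpose_apply, hW]
            simp only [Matrix.of_apply]
            ring
        _ = ((Y * W) * Wᵀ) i j := by
            rw [Matrix.mul_apply]
            exact Finset.sum_congr rfl fun l _ => by rw [Matrix.mul_apply]
    rw [hfac]
    calc ((Y * W) * Wᵀ).rank ≤ (Y * W).rank := Matrix.rank_mul_le_left _ _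
      _ ≤ Fintype.card (Fin r) := Matrix.rank_le_card_width _
      _ = r := Fintype.card_fin r
  · exact (YQ_ip Y w).trans hval
  · exact (YQ_fro Y w hw).trans hval

lemma fconj_fRank_eq {r : ℕ} (hr1 : 1 ≤ r) (hrm : r ≤ m) :
    fconj (fRank r) Y = ((2⁻¹ * truncFro r Y ^ 2 : ℝ) : EReal) := by
  apply le_antisymm
  · refine iSup_le fun M => ?_
    by_cases hM : M.rank ≤ r
    · rw [fRank, if_pos hM, ← EReal.coe_sub, EReal.coe_le_coe_iff]
      have h1 := ip_rank_le Y hr1 hrm M hM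
      have h2 := fro_nonneg M
      have h3 := truncFro_nonneg r Y
      nlinarith [sq_nonneg (fro M - truncFro r Y)]
    · rw [fRank, if_neg hM, EReal.sub_top]
      exact bot_le
  · obtain ⟨M₀, hrank, hip, hfro⟩ := exists_attain Y hrm
    refine le_trans ?_ (le_iSup _ M₀)
    rw [fRank, if_pos hrank, ← EReal.coe_sub, EReal.coe_le_coe_iff, truncFro_sq, hip, hfro]
    linarith

lemma sv_zero (i : ℕ) : sv (0 : Matrix (Fin n) (Fin m) ℝ) i = 0 := by
  rcases lt_or_ge i m with h | h
  · rw [sv_eq_of_lt _ h]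
    have hsum : ∑ j, evs (0 : Matrix (Fin n) (Fin m) ℝ) j = 0 := by
      rw [sum_evs_eq]
      simp
    have hz := (Finset.sum_eq_zero_iff_of_nonneg
      (fun j _ => evs_nonneg (0 : Matrix (Fin n) (Fin m) ℝ) j)).1 hsum
    rw [hz _ (Finset.mem_univ _), Real.sqrt_zero]
  · exact sv_eq_of_ge _ h

lemma truncFro_zero (r : ℕ) : truncFro r (0 : Matrix (Fin n) (Fin m) ℝ) = 0 := by
  simp [truncFro, sv_zero]

lemma ip_zero (M : Matrix (Fin n) (Fin m) ℝ) : ip M 0 = 0 := by simp [ip]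

lemma ip_smul (M : Matrix (Fin n) (Fin m) ℝ) (c : ℝ) : ip M (c • Y) = c * ip M Y := by
  rw [ip, ip, Finset.mul_sum]
  refine Finset.sum_congr rfl fun i _ => ?_
  rw [Finset.mul_sum]
  refine Finset.sum_congr rfl fun j _ => ?_
  rw [Matrix.smul_apply, smul_eq_mul]
  ring

lemma smul_transpose_mul_smul (c : ℝ) :
    ((c • Y)ᵀ * (c • Y)) = (c ^ 2) • (Yᵀ * Y) := by
  rw [Matrix.transpose_smul, Matrix.smul_mul, Matrix.mul_smul, smul_smul, sq]

lemma truncFro_sq_smul {r : ℕ} (hrm : r ≤ m) (c : ℝ) (hc : 0 < c) :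
    truncFro r (c • Y) ^ 2 = c ^ 2 * truncFro r Y ^ 2 := by
  have key : ∀ {k : ℕ} (w : Fin k → EuclideanSpace ℝ (Fin m)),
      ∑ a, ∑ b, ((c • Y)ᵀ * (c • Y)) a b * (∑ l, w l a * w l b)
        = c ^ 2 * ∑ a, ∑ b, (Yᵀ * Y) a b * (∑ l, w l a * w l b) := by
    intro k w
    rw [Finset.mul_sum]
    refine Finset.sum_congr rfl fun a _ => ?_
    rw [Finset.mul_sum]
    refine Finset.sum_congr rfl fun b _ => ?_
    rw [smul_transpose_mul_smul, Matrix.smul_apply, smul_eq_mul]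
    ring
  have hc2 : 0 < c ^ 2 := by positivity
  apply le_antisymm
  · obtain ⟨hw, hval⟩ := traceQ_attain (c • Y) hrm
    rw [truncFro_sq, ← hval, key]
    have := traceQ_le Y hrm (le_refl r) hw
    rw [truncFro_sq]
    nlinarith
  · obtain ⟨hw, hval⟩ := traceQ_attain Y hrm
    rw [truncFro_sq r Y, ← hval]
    have h2 := traceQ_le (c • Y) hrm (le_refl r) hw
    rw [← truncFro_sq, key] at h2
    nlinarith

lemma truncFro_smul {r : ℕ} (hrm : r ≤ m) (c : ℝ) (hc : 0 < c) :
    truncFro r (c • Y) = c * truncFro r Y := by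
  have h := truncFro_sq_smul Y hrm c hc
  have h1 : truncFro r (c • Y) = Real.sqrt (truncFro r (c • Y) ^ 2) :=
    (Real.sqrt_sq (truncFro_nonneg _ _)).symm
  rw [h1, h, show c ^ 2 * truncFro r Y ^ 2 = (c * truncFro r Y) ^ 2 by ring,
    Real.sqrt_sq (mul_nonneg hc.le (truncFro_nonneg _ _))]

lemma ip_comm (A B : Matrix (Fin n) (Fin m) ℝ) : ip A B = ip B A := by
  rw [ip, ip]
  exact Finset.sum_congr rfl fun i _ => Finset.sum_congr rfl fun j _ => mul_comm _ _

lemma ip_zero_left (M : Matrix (Fin n) (Fin m) ℝ) : ip 0 M = 0 := by simp [ip]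

end

end Aux

/-- the biconjugate (convex envelope) of `½‖·‖_F² + χ_{rank ≤ r}` is
`½‖·‖_{F,r*}²`, half the squared low-rank inducing Frobenius norm. -/
theorem biconjugate_eq_half_sq_lowRankFro {n m r : ℕ} (hr1 : 1 ≤ r) (hr2 : r ≤ min n m)
    (M : Matrix (Fin n) (Fin m) ℝ) :
    fconj (fconj (fRank r)) M = ((2⁻¹ * lowRankFro r M ^ 2 : ℝ) : EReal) := by
  classical
  have hrm : r ≤ m := le_trans hr2 (min_le_right n m)
  have hfe : fconj (fRank r) = fun Y : Matrix (Fin n) (Fin m) ℝ =>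
      ((2⁻¹ * truncFro r Y ^ 2 : ℝ) : EReal) := funext fun Y => fconj_fRank_eq Y hr1 hrm
  rw [hfe]
  set F : Matrix (Fin n) (Fin m) ℝ → ℝ := fun Y => ip Y M - 2⁻¹ * truncFro r Y ^ 2 with hF
  have hbody : fconj (fun Y : Matrix (Fin n) (Fin m) ℝ =>
      ((2⁻¹ * truncFro r Y ^ 2 : ℝ) : EReal)) M = ⨆ Y, ((F Y : ℝ) : EReal) := by
    rw [fconj]
    congr 1
  rw [hbody]
  set d := lowRankFro r M with hd
  set S : Set ℝ := {c : ℝ | ∃ Y, truncFro r Y ≤ 1 ∧ c = ip M Y} with hS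
  have hdS : d = sSup S := rfl
  have hS0 : (0 : ℝ) ∈ S := ⟨0, by rw [truncFro_zero]; norm_num, (ip_zero M).symm⟩
  have hbdd : BddAbove S := by
    refine ⟨fro M * (Real.sqrt m * 1), ?_⟩
    rintro c ⟨Y, hY1, rfl⟩
    calc ip M Y ≤ fro M * fro Y := ip_le_fro_mul_fro M Y
      _ ≤ fro M * (Real.sqrt m * truncFro r Y) :=
          mul_le_mul_of_nonneg_left (fro_le_sqrt_mul_truncFro Y hr1 hrm) (fro_nonneg M)
      _ ≤ fro M * (Real.sqrt m * 1) := by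
          have h := mul_le_mul_of_nonneg_left hY1 (Real.sqrt_nonneg (m:ℝ))
          exact mul_le_mul_of_nonneg_left h (fro_nonneg M)
  have hd0 : 0 ≤ d := by rw [hdS]; exact le_csSup hbdd hS0
  apply le_antisymm
  · refine iSup_le fun Y => ?_
    rw [EReal.coe_le_coe_iff, hF]
    simp only
    have hipc : ip Y M = ip M Y := ip_comm Y M
    by_cases ht : truncFro r Y = 0
    · have hip0 : ip M Y ≤ 0 := by
        calc ip M Y ≤ fro M * fro Y := ip_le_fro_mul_fro M Y
          _ ≤ fro M * (Real.sqrt m * truncFro r Y) :=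
              mul_le_mul_of_nonneg_left (fro_le_sqrt_mul_truncFro Y hr1 hrm) (fro_nonneg M)
          _ = 0 := by rw [ht]; ring
      have h3 := truncFro_nonneg r Y
      rw [hipc]
      nlinarith
    · have htpos : 0 < truncFro r Y := lt_of_le_of_ne (truncFro_nonneg r Y) (Ne.symm ht)
      have hs1 : truncFro r ((truncFro r Y)⁻¹ • Y) = 1 := by
        rw [truncFro_smul Y hrm _ (inv_pos.2 htpos), inv_mul_cancel₀ ht]
      have hmem : ip M ((truncFro r Y)⁻¹ • Y) ∈ S := ⟨_, le_of_eq hs1, rfl⟩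
      have hle : ip M ((truncFro r Y)⁻¹ • Y) ≤ d := by rw [hdS]; exact le_csSup hbdd hmem
      rw [ip_smul] at hle
      have hip_le : ip M Y ≤ truncFro r Y * d := by
        have h := mul_le_mul_of_nonneg_left hle htpos.le
        rw [← mul_assoc, mul_inv_cancel₀ ht, one_mul] at h
        exact h
      rw [hipc]
      nlinarith [sq_nonneg (truncFro r Y - d)]
  · refine le_of_forall_lt fun c hc => ?_
    rcases eq_or_ne c ⊥ with rfl | hcb
    · calc (⊥ : EReal) < ((F 0 : ℝ) : EReal) := EReal.bot_lt_coe _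
        _ ≤ ⨆ Y, ((F Y : ℝ) : EReal) := le_iSup (fun Y => ((F Y : ℝ) : EReal)) 0
    · have hct : c ≠ ⊤ := ne_top_of_lt hc
      have hca : ((c.toReal : ℝ) : EReal) = c := EReal.coe_toReal hct hcb
      set a := c.toReal with hadef
      have ha : a < 2⁻¹ * d ^ 2 := by
        rw [← EReal.coe_lt_coe_iff, hca]
        exact hc
      obtain ⟨Y₀, hFY⟩ : ∃ Y₀, a < F Y₀ := by
        by_cases hdz : d = 0
        · refine ⟨0, ?_⟩
          rw [hF]
          simp only
          rw [ip_zero_left, truncFro_zero]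
          rw [hdz] at ha
          norm_num at ha ⊢
          linarith
        · have hdpos : 0 < d := lt_of_le_of_ne hd0 (Ne.symm hdz)
          have hεpos : 0 < (2⁻¹ * d ^ 2 - a) / d := div_pos (by linarith) hdpos
          obtain ⟨cs, hcs_mem, hcs_lt⟩ := exists_lt_of_lt_csSup ⟨0, hS0⟩
            (show d - (2⁻¹ * d ^ 2 - a) / d < sSup S by rw [← hdS]; linarith)
          obtain ⟨Y₁, hY₁, rfl⟩ := hcs_mem
          refine ⟨d • Y₁, ?_⟩
          rw [hF]
          simp only
          rw [show ip (d • Y₁) M = ip M (d • Y₁) from ip_comm _ _, ip_smul,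
            truncFro_sq_smul Y₁ hrm d hdpos]
          have ht1 : truncFro r Y₁ ^ 2 ≤ 1 := by
            nlinarith [truncFro_nonneg r Y₁]
          have hdd : d * ((2⁻¹ * d ^ 2 - a) / d) = 2⁻¹ * d ^ 2 - a :=
            mul_div_cancel₀ _ hdz
          nlinarith [mul_lt_mul_of_pos_left hcs_lt hdpos, sq_nonneg d, hdpos]
      calc c = ((a : ℝ) : EReal) := hca.symm
        _ < ((F Y₀ : ℝ) : EReal) := EReal.coe_lt_coe_iff.2 hFY
        _ ≤ ⨆ Y, ((F Y : ℝ) : EReal) := le_iSup (fun Y => ((F Y : ℝ) : EReal)) Y₀
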